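/- arXiv:2308.16143 — 2 statements merged into one kernel-verified Lean document; each statement's English description precedes it below -/
import Mathlib

section
/- Fix integers c, d, n with n ≥ 1, and positive integers r_0, l_0, t with l_0 dividing n. Consider the system of congruences l_0·[(s_1+⋯+s_t)·r_0·(2c+d) − s_i·d] ≡ 0 (mod n) for i = 1,…,t, in unknowns s_1,…,s_t ∈ Z. If d = 1 (the Kazhdan–Patterson case) and additionally l_0 divides r_0·t and gcd(l_0, 2c·r_0·t + r_0·t − 1) = 1, then the solution set is exactly { (s_1,…,s_t) : s_i = k_i·(n/l_0) + k·(2c+1)·n/gcd(n, 2r·c + r − 1) for some integers k, k_1,…,k_t }, where r = r_0·t. -/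
/-- Solution of the congruence system for a Kazhdan–Patterson cover (`d = 1`).
For integers `c` and positive integers `n, r₀, l₀, t` with `l₀ ∣ n`, `l₀ ∣ r₀·t` and
`gcd(l₀, 2c·r₀t + r₀t − 1) = 1`, a tuple `(s₁,…,s_t) ∈ ℤ^t` satisfies
`l₀·[(s₁+⋯+s_t)·r₀·(2c+1) − sᵢ] ≡ 0 (mod n)` for all `i` if and only if there are integers
`k, k₁, …, k_t` with `sᵢ = kᵢ·(n/l₀) + k·(2c+1)·(n / gcd(n, 2rc + r − 1))`, where `r = r₀·t`. -/
theorem stmt4 (c : ℤ) (n r0 l0 t : ℕ) (hn : 0 < n) (hr0 : 0 < r0) (hl0 : 0 < l0)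
    (ht : 0 < t) (hdvd : l0 ∣ n) (hdvd2 : l0 ∣ r0 * t)
    (hcop : IsCoprime (l0 : ℤ) (2 * c * ((r0 : ℤ) * t) + (r0 : ℤ) * t - 1))
    (s : Fin t → ℤ) :
    (∀ i, (n : ℤ) ∣ (l0 : ℤ) * ((∑ j, s j) * r0 * (2 * c + 1) - s i)) ↔
      (∃ (k : ℤ) (ki : Fin t → ℤ), ∀ i,
        s i = ki i * ((n / l0 : ℕ) : ℤ) + k * (2 * c + 1) *
          ((n / Int.gcd (n : ℤ) (2 * ((r0 : ℤ) * t) * c + (r0 : ℤ) * t - 1) : ℕ) : ℤ)) := by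
  have hL : (0:ℤ) < l0 := by exact_mod_cast hl0
  set m : ℤ := 2 * ((r0 : ℤ) * t) * c + (r0 : ℤ) * t - 1 with hm
  have hcop' : IsCoprime (l0 : ℤ) m := by
    have h : m = 2 * c * ((r0 : ℤ) * t) + (r0 : ℤ) * t - 1 := by rw [hm]; ring
    rw [h]; exact hcop
  set g : ℕ := Int.gcd (n : ℤ) m with hg
  have hgpos : 0 < g := by
    rw [hg, Int.gcd_pos_iff]
    exact Or.inl (by exact_mod_cast hn.ne')
  have hgZ : ((g:ℤ)) ≠ 0 := by exact_mod_cast hgpos.ne'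
  set A : ℤ := ((n / l0 : ℕ) : ℤ) with hA
  set B : ℤ := ((n / g : ℕ) : ℤ) with hB
  have hgdvdn : (g:ℤ) ∣ (n:ℤ) := Int.gcd_dvd_left _ _
  have hgdvdm : (g:ℤ) ∣ m := Int.gcd_dvd_right _ _
  have hgn : g ∣ n := by exact_mod_cast hgdvdn
  have hNA : (n:ℤ) = (l0:ℤ) * A := by
    rw [hA]; exact_mod_cast (Nat.mul_div_cancel' hdvd).symm
  have hNB : (n:ℤ) = (g:ℤ) * B := by
    rw [hB]; exact_mod_cast (Nat.mul_div_cancel' hgn).symm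
  have hcopLg : IsCoprime (l0:ℤ) (g:ℤ) := hcop'.of_isCoprime_of_dvd_right hgdvdm
  have hgA : (g:ℤ) ∣ A := hcopLg.symm.dvd_of_dvd_mul_left (hNA ▸ hgdvdn)
  obtain ⟨A', hA'⟩ := hgA
  obtain ⟨m', hm'⟩ := hgdvdm
  have hBA' : B = (l0:ℤ) * A' := by
    have h : (g:ℤ) * B = (g:ℤ) * ((l0:ℤ) * A') := by
      rw [← hNB, hNA, hA']; ring
    exact mul_left_cancel₀ hgZ h
  -- gcd A m = g
  have hgam : Int.gcd A m = g := by
    apply Nat.dvd_antisymm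
    · have h1 : (Int.gcd A m : ℤ) ∣ (n:ℤ) := (Int.gcd_dvd_left (a := A) (b := m)).trans ⟨(l0:ℤ), by rw [hNA]; ring⟩
      have h2 : (Int.gcd A m : ℤ) ∣ (g:ℤ) := Int.dvd_coe_gcd h1 (Int.gcd_dvd_right _ _)
      exact_mod_cast h2
    · have h2 : (g:ℤ) ∣ (Int.gcd A m : ℤ) := Int.dvd_coe_gcd ⟨A', hA'⟩ ⟨m', hm'⟩
      exact_mod_cast h2
  have hcoA'm' : IsCoprime A' m' := by
    rw [Int.isCoprime_iff_gcd_eq_one]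
    have := Int.gcd_div_gcd_div_gcd (i := A) (j := m) (by rw [hgam]; exact_mod_cast hgpos)
    rw [hgam] at this
    rwa [hA', hm', Int.mul_ediv_cancel_left _ hgZ, Int.mul_ediv_cancel_left _ hgZ] at this
  constructor
  · intro H
    set S : ℤ := ∑ j, s j with hS
    have h1 : ∀ i, A ∣ S * r0 * (2*c+1) - s i := by
      intro i
      have := H i
      rw [hNA] at this
      exact (mul_dvd_mul_iff_left hL.ne').mp this
    have hsum : ∑ i : Fin t, (S * r0 * (2*c+1) - s i) = S * m := by
      rw [Finset.sum_sub_distrib, Finset.sum_const, Finset.card_univ, Fintype.card_fin,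
        ← hS, hm, nsmul_eq_mul]
      ring
    have h2 : A ∣ S * m := hsum ▸ Finset.dvd_sum (fun i _ => h1 i)
    have h3 : A ∣ (S * (r0:ℤ)) * m := by
      have := h2.mul_left (r0:ℤ)
      rw [show S * (r0:ℤ) * m = (r0:ℤ) * (S * m) by ring]; exact this
    have h4 : A' ∣ (S * (r0:ℤ)) := by
      apply hcoA'm'.dvd_of_dvd_mul_right
      have h5 : (g:ℤ) * A' ∣ (g:ℤ) * (S * (r0:ℤ) * m') := by
        rw [← hA']
        convert h3 using 1
        rw [hm']; ring
      exact (mul_dvd_mul_iff_left hgZ).mp h5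
    obtain ⟨u, hu⟩ := h4
    obtain ⟨x, y, hxy⟩ := hcopLg
    refine ⟨u * x, fun i => (s i - (u*x) * (2*c+1) * B) / A, fun i => ?_⟩
    have hdi : A ∣ s i - (u*x) * (2*c+1) * B := by
      have e1 : A ∣ s i - S * (r0:ℤ) * (2*c+1) := dvd_sub_comm.mp (h1 i)
      have e2 : A ∣ S * (r0:ℤ) * (2*c+1) - (u*x) * (2*c+1) * B := by
        refine ⟨(2*c+1) * u * y, ?_⟩
        rw [hBA', hu, hA']
        linear_combination (-(u*(2*c+1)*A')) * hxy
      have := dvd_add e1 e2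
      rw [show s i - (u*x) * (2*c+1) * B = (s i - S * (r0:ℤ) * (2*c+1)) + (S * (r0:ℤ) * (2*c+1) - (u*x) * (2*c+1) * B) by ring]; exact this
    rw [Int.ediv_mul_cancel hdi]; ring
  · rintro ⟨k, ki, hs⟩ i
    set K : ℤ := ∑ j, ki j with hK
    have hBm : (l0:ℤ) * A * m' = B * m := by
      have h : (l0:ℤ) * A = (g:ℤ) * B := by rw [← hNA, hNB]
      rw [h, hm']; ring
    refine ⟨K * r0 * (2*c+1) - ki i + (l0:ℤ) * k * (2*c+1) * m', ?_⟩
    have hsumS : ∑ j, s j = K * A + (t:ℤ) * (k * (2*c+1) * B) := by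
      calc ∑ j, s j = ∑ j, (ki j * A + k * (2*c+1) * B) :=
            Finset.sum_congr rfl (fun j _ => hs j)
        _ = (∑ j, ki j * A) + ∑ j : Fin t, k * (2*c+1) * B := Finset.sum_add_distrib
        _ = K * A + (t:ℤ) * (k * (2*c+1) * B) := by
            rw [Finset.sum_const, Finset.card_univ, Fintype.card_fin, nsmul_eq_mul, hK,
              Finset.sum_mul]
    rw [hsumS, hs i, hNA]
    linear_combination (-(((l0:ℤ))*k*(2*c+1))) * hBm + (-((l0:ℤ)*k*(2*c+1)*B)) * hm
end

section
/- Let G be a group with subgroups satisfying an Iwahori-type factorization: J = (J ∩ N⁻)·(J ∩ M)·(J ∩ N) with uniqueness of the decomposition, and let w ∈ G normalize M with J^w also admitting the factorization J = (J ∩ N⁻ʷ)·(J ∩ M)·(J ∩ Nʷ), where conjugation by w preserves M componentwise. Let ρ be a representation of a group J̃ ⊇ J trivial on the subgroups corresponding to J∩N, J∩N⁻ and their w-conjugates. If Φ is a nonzero homomorphism intertwining ρ and ρ^w on the M-part, then Φ intertwines ρ and ρ^w on all of J ∩ J^w; consequently Hom_{J ∩ J^w}(ρ, ρ^w) = Hom_{J_M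 ∩ J_M^w}(ρ, ρ^w) where J_M = J ∩ M. -/
/-- Let `G` be a group with subgroups `M, N, N⁻, J`, and `w ∈ G` normalizing
`M`.  Suppose `J` has an exact Iwahori factorization with respect to `(N⁻, M, N)`:
every `g ∈ J ∩ J^w` can be written `g = u'·m·u` with `u' ∈ J∩N⁻`, `m ∈ J∩M`, `u ∈ J∩N`,
whose components have `w`-conjugates back in `J`.  Let `ρ` be a representation trivial on
`J∩N`, `J∩N⁻` and on their `w`-conjugates.  Then a linear map intertwining `ρ` with `ρ^w`
on the `M`-part intertwines them on all of `J ∩ J^w`; consequently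
`Hom_{J∩J^w}(ρ, ρ^w) = Hom_{J_M ∩ J_M^w}(ρ, ρ^w)`. -/
theorem stmt19 (G : Type*) [Group G] (M N N' J : Subgroup G) (w : G)
    (V : Type*) [AddCommGroup V] [Module ℂ V]
    (ρ : G →* (V →ₗ[ℂ] V))
    (hnormM : ∀ x ∈ M, w * x * w⁻¹ ∈ M)
    (htrivN : ∀ x : G, x ∈ J → x ∈ N → ρ x = LinearMap.id)
    (htrivN' : ∀ x : G, x ∈ J → x ∈ N' → ρ x = LinearMap.id)
    (htrivNw : ∀ x : G, x ∈ J → x ∈ N → ρ (w * x * w⁻¹) = LinearMap.id)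
    (htrivN'w : ∀ x : G, x ∈ J → x ∈ N' → ρ (w * x * w⁻¹) = LinearMap.id)
    (hdec : ∀ g : G, g ∈ J → w * g * w⁻¹ ∈ J →
      ∃ u' m u : G, u' ∈ J ∧ u' ∈ N' ∧ m ∈ J ∧ m ∈ M ∧ u ∈ J ∧ u ∈ N ∧
        g = u' * m * u ∧ w * u' * w⁻¹ ∈ J ∧ w * m * w⁻¹ ∈ J ∧ w * u * w⁻¹ ∈ J) :
    {Φ : V →ₗ[ℂ] V | ∀ x : G, x ∈ J → w * x * w⁻¹ ∈ J →
        Φ ∘ₗ ρ x = ρ (w * x * w⁻¹) ∘ₗ Φ} =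
    {Φ : V →ₗ[ℂ] V | ∀ x : G, x ∈ J → x ∈ M → w * x * w⁻¹ ∈ J →
        Φ ∘ₗ ρ x = ρ (w * x * w⁻¹) ∘ₗ Φ} := by
  ext Φ
  simp only [Set.mem_setOf_eq]
  constructor
  · intro h x hxJ _ hxw
    exact h x hxJ hxw
  · intro h g hgJ hgw
    obtain ⟨u', m, u, hu'J, hu'N, hmJ, hmM, huJ, huN, hg, hwu', hwm, hwu⟩ := hdec g hgJ hgw
    have h1 : ρ g = ρ m := by
      rw [hg, map_mul, map_mul, htrivN' u' hu'J hu'N, htrivN u huJ huN]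
      rfl
    have h2 : ρ (w * g * w⁻¹) = ρ (w * m * w⁻¹) := by
      have : w * g * w⁻¹ = (w * u' * w⁻¹) * (w * m * w⁻¹) * (w * u * w⁻¹) := by
        rw [hg]; group
      rw [this, map_mul, map_mul, htrivN'w u' hu'J hu'N, htrivNw u huJ huN]
      rfl
    rw [h1, h2]
    exact h m hmJ hmM hwm
end
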